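/- Let ℓ be a Lyndon word and let m be a Lyndon word of length greater than 1 with standard factorization m = uv, such that the length of ℓ is strictly smaller than the length of m. Then ℓ > u if and only if ℓ > m (i.e. ℓ > uv). -/

import Mathlib

variable {I : Type*} [LinearOrder I]

/-- A word is *Lyndon* if it is nonempty and lexicographically strictly smaller
than each of its proper nonempty suffixes. -/
def IsLyndon (w : List I) : Prop :=
  w ≠ [] ∧ ∀ u v : List I, w = u ++ v → u ≠ [] → v ≠ [] → w < v

/-- `m = u ++ v` is the *standard factorization* of the Lyndon word `m`:
`u` is the longest proper nonempty Lyndon prefix of `m`. -/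
def IsStandardFactorization (m u v : List I) : Prop :=
  m = u ++ v ∧ u ≠ [] ∧ v ≠ [] ∧ IsLyndon u ∧
    ∀ p q : List I, m = p ++ q → p ≠ [] → q ≠ [] → IsLyndon p → p.length ≤ u.length

lemma lt_append_right' (s r : List I) (hr : r ≠ []) : s < s ++ r := by
  induction s with
  | nil =>
    cases r with
    | nil => exact absurd rfl hr
    | cons a t => exact List.Lex.nil
  | cons a s ih => exact List.Lex.cons ih

lemma lt_decomp' : ∀ {x y : List I}, x < y →
    x <+: y ∨ ∃ w a b x' y', a < b ∧ x = w ++ a :: x' ∧ y = w ++ b :: y' := by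
  intro x y h
  have h' : List.Lex (· < ·) x y := h
  clear h
  induction h' with
  | nil => exact Or.inl (List.nil_prefix)
  | @cons a l₁ l₂ hlex ih =>
    rcases ih with hp | ⟨w, c, d, x', y', hcd, rfl, rfl⟩
    · exact Or.inl (List.cons_prefix_cons.mpr ⟨rfl, hp⟩)
    · exact Or.inr ⟨a :: w, c, d, x', y', hcd, rfl, rfl⟩
  | @rel a₁ l₁ a₂ l₂ hr => exact Or.inr ⟨[], a₁, a₂, l₁, l₂, hr, rfl, rfl⟩

lemma append_left_lt' {x y : List I} (w : List I) (h : w ++ x < w ++ y) : x < y := by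
  induction w with
  | nil => exact h
  | cons a w ih => exact ih ((List.cons_lt_cons_iff.mp h).resolve_left (lt_irrefl a)).2

lemma key_lt' {a b : I} {r r' : List I} (hab : a < b) :
    ∀ (s p : List I), s.length < p.length → p ++ a :: r < s ++ a :: r' →
      p ++ [b] < s ++ [b] := by
  intro s
  induction s with
  | nil =>
    intro p hlen h
    cases p with
    | nil => simp at hlen
    | cons c p' =>
      have h' : List.Lex (· < ·) (c :: (p' ++ a :: r)) (a :: r') := h
      cases h' with
      | cons h'' => exact List.Lex.rel hab
      | rel h'' => exact List.Lex.rel (lt_trans h'' hab)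
  | cons d s' ih =>
    intro p hlen h
    cases p with
    | nil => simp at hlen
    | cons c p' =>
      have h' : List.Lex (· < ·) (c :: (p' ++ a :: r)) (d :: (s' ++ a :: r')) := h
      cases h' with
      | cons h'' =>
        exact List.Lex.cons (ih p' (by simpa using Nat.lt_of_succ_lt_succ hlen) h'')
      | rel h'' => exact List.Lex.rel h''

lemma bump_lyndon' {l p r : List I} {a b : I} (hl : IsLyndon l)
    (hsplit : l = p ++ a :: r) (hab : a < b) : IsLyndon (p ++ [b]) := by
  refine ⟨by simp, fun x y hxy hx hy => ?_⟩
  have hlenxy := congrArg List.length hxy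
  simp at hlenxy
  have hylen : 0 < y.length := List.length_pos_iff.mpr hy
  have hxp : x <+: p :=
    List.prefix_of_prefix_length_le ⟨y, hxy.symm⟩ (List.prefix_append p [b]) (by omega)
  obtain ⟨s, rfl⟩ := hxp
  have hy' : y = s ++ [b] := by
    have := hxy
    rw [List.append_assoc] at this
    exact (List.append_cancel_left this).symm
  subst hy'
  have hls : l < s ++ a :: r :=
    hl.2 x (s ++ a :: r) (by rw [hsplit]; simp) hx (by simp)
  rw [hsplit] at hls
  have hlen : s.length < (x ++ s).length := by
    have : 0 < x.length := List.length_pos_iff.mpr hx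
    simp; omega
  exact key_lt' hab s (x ++ s) hlen (by simpa using hls)

/-- Let `ℓ` be Lyndon and `m = uv` the standard factorization of a Lyndon word `m`
of length `> 1`, with `|ℓ| < |m|`. Then `ℓ > u ↔ ℓ > m`. -/
theorem gt_leftStandard_iff_gt (l m u v : List I)
    (hl : IsLyndon l) (hm : IsLyndon m) (hmlen : 1 < m.length)
    (hsf : IsStandardFactorization m u v) (hlen : l.length < m.length) :
    u < l ↔ m < l := by
  obtain ⟨hmuv, hu, hv, hLu, hmax⟩ := hsf
  constructor
  · intro hul
    by_contra hml
    have hlm : l < m := lt_of_le_of_ne (not_lt.mp hml)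
      (fun h => by rw [h] at hlen; exact lt_irrefl _ hlen)
    have hupl : u <+: l := by
      rcases lt_decomp' hul with hp | ⟨w, a, b, u₁, l₁, hab, hue, hle⟩
      · exact hp
      · exfalso
        apply hml
        rw [hmuv, hue, hle, List.append_assoc]
        exact List.Lex.append_left _ (List.Lex.rel hab) w
    obtain ⟨t, rfl⟩ := hupl
    have ht : t ≠ [] := by
      rintro rfl
      simp at hul
    have htv : t < v := by
      apply append_left_lt' u
      rw [← hmuv]
      exact hlm
    rcases lt_decomp' htv with hp | ⟨w, a, b, t', v', hab, hte, hve⟩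
    · obtain ⟨z, hz⟩ := hp
      have hz' : z ≠ [] := by
        rintro rfl
        rw [← hz] at hmuv
        rw [hmuv, List.append_nil] at hlen
        exact lt_irrefl _ hlen
      have hle := hmax (u ++ t) z (by rw [hmuv, ← hz, List.append_assoc]) (by simp [hu]) hz' hl
      have := List.length_pos_iff.mpr ht
      rw [List.length_append] at hle
      omega
    · have hP : IsLyndon ((u ++ w) ++ [b]) :=
        bump_lyndon' (r := t') hl (by rw [hte]; simp) hab
      have hPm : m = ((u ++ w) ++ [b]) ++ v' := by rw [hmuv, hve]; simp
      have hv' : v' ≠ [] := by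
        rintro rfl
        have h1 := congrArg List.length hPm
        have h2 := congrArg List.length hte
        simp at h1 h2
        simp [h2] at hlen
        omega
      have hle := hmax ((u ++ w) ++ [b]) v' hPm (by simp) hv' hP
      simp at hle
  · intro hml
    by_contra hul
    have h1 : l ≤ u := not_lt.mp hul
    have h2 : u < m := by
      rw [hmuv]
      exact lt_append_right' u v hv
    exact lt_irrefl m (lt_trans (lt_of_lt_of_le hml h1) h2)
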